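/- Let f : ℂ → ℂ be holomorphic on ℂ \ ℤ'. Suppose that for each a ∈ ℤ' there is a complex number r(a) such that the function z ↦ f(z) − r(a)/(z − a) extends holomorphically to a neighborhood of a (i.e., f has at most a simple pole at a with residue r(a)), and suppose that max_{|z|=n} |f(z)| → 0 as n → ∞ through positive integers. Then for every z ∈ ℂ \ ℤ', the symmetric partial sums Σ_{a∈ℤ', |a|<n} r(a)/(z − a) converge, as n → ∞ through positive integers, to f(z). -/

import Mathlib

open scoped Topology

open Complex Metric Finset Set

namespace PFE

noncomputable def hpt (m : ℤ) : ℂ := (m : ℂ) + 1 / 2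

lemma hpt_injective : Function.Injective hpt := by
  intro a b h
  have h' : (a : ℂ) + 1/2 = (b : ℂ) + 1/2 := h
  have : (a : ℂ) = (b : ℂ) := add_right_cancel h'
  exact_mod_cast this

lemma hpt_eq_ofReal (m : ℤ) : hpt m = ((m + 1/2 : ℝ) : ℂ) := by
  unfold hpt; push_cast; ring

lemma abs_hpt (m : ℤ) : ‖hpt m‖ = |(m : ℝ) + 1/2| := by
  rw [hpt_eq_ofReal, Complex.norm_real, Real.norm_eq_abs]

lemma abs_hpt_ne_nat (m : ℤ) (n : ℕ) : ‖hpt m‖ ≠ n := by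
  rw [abs_hpt]
  intro h
  rcases abs_eq (by positivity : (0:ℝ) ≤ n) |>.mp h with h | h
  · have h2 : ((2*m+1 : ℤ) : ℝ) = ((2*n : ℤ) : ℝ) := by push_cast; linarith
    have := Int.cast_injective (α := ℝ) h2
    omega
  · have h2 : ((2*m+1 : ℤ) : ℝ) = ((-(2*n) : ℤ) : ℝ) := by push_cast; linarith
    have := Int.cast_injective (α := ℝ) h2
    omega

lemma abs_hpt_lt_iff (m : ℤ) (n : ℕ) :
    ‖hpt m‖ < n ↔ m ∈ Finset.Ico (-(n:ℤ)) (n:ℤ) := by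
  rw [abs_hpt, abs_lt, Finset.mem_Ico]
  constructor
  · rintro ⟨h1, h2⟩
    have h1' : (-(n:ℤ) : ℝ) < (m : ℝ) + 1 := by push_cast; linarith
    have h2' : ((m:ℤ) : ℝ) < ((n:ℤ) : ℝ) := by push_cast; linarith
    have h1'' : (-(n:ℤ)) < m + 1 := by exact_mod_cast h1'
    have h2'' : (m : ℤ) < (n : ℤ) := by exact_mod_cast h2'
    omega
  · rintro ⟨h1, h2⟩
    have h1' : ((-(n:ℤ)) : ℝ) ≤ (m : ℝ) := by exact_mod_cast h1
    have h2' : ((m : ℤ) : ℝ) + 1 ≤ ((n:ℤ) : ℝ) := by exact_mod_cast (by omega : m + 1 ≤ (n:ℤ))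
    constructor <;> push_cast at h1' h2' ⊢ <;> linarith

lemma isClosedMap_hpt : IsClosedMap hpt := by
  have h1 : IsClosedMap (fun m : ℤ => ((m : ℝ) : ℂ)) :=
    (Complex.isometry_ofReal.isClosedEmbedding.comp Int.isClosedEmbedding_coe_real).isClosedMap
  have h2 : IsClosedMap (fun w : ℂ => w + 1/2) := (Homeomorph.addRight (1/2 : ℂ)).isClosedMap
  have : hpt = (fun w : ℂ => w + 1/2) ∘ (fun m : ℤ => ((m : ℝ) : ℂ)) := by
    funext m; simp [hpt]
  rw [this]
  exact h2.comp h1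

lemma isOpen_U : IsOpen {z : ℂ | ∀ m : ℤ, z ≠ hpt m} := by
  have : {z : ℂ | ∀ m : ℤ, z ≠ hpt m} = (Set.range hpt)ᶜ := by
    ext z; simp [Set.mem_range, eq_comm]
  rw [this]
  exact (isClosedMap_hpt.isClosed_range).isOpen_compl

lemma eventually_mem_U (k : ℤ) :
    ∀ᶠ w in 𝓝[≠] (hpt k), ∀ m : ℤ, w ≠ hpt m := by
  have hcl : IsClosed (hpt '' {j : ℤ | j ≠ k}) := isClosedMap_hpt _ (isClosed_discrete _)
  have hmem : hpt k ∈ (hpt '' {j : ℤ | j ≠ k})ᶜ := by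
    intro hx
    rcases hx with ⟨j, hj, hjk⟩
    exact hj (hpt_injective hjk)
  have : ∀ᶠ w in 𝓝 (hpt k), w ∉ hpt '' {j : ℤ | j ≠ k} :=
    hcl.isOpen_compl.eventually_mem hmem
  rw [eventually_nhdsWithin_iff]
  filter_upwards [this] with w hw hw' m hm
  subst hm
  rcases eq_or_ne m k with h | h
  · exact hw' (by simp [h])
  · exact hw ⟨m, h, rfl⟩

lemma circleIntegral_finset_sum {ι : Type*} (s : Finset ι) (g : ι → ℂ → ℂ) (c : ℂ) (R : ℝ)
    (h : ∀ i ∈ s, CircleIntegrable (g i) c R) :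
    (∮ w in C(c, R), ∑ i ∈ s, g i w) = ∑ i ∈ s, ∮ w in C(c, R), g i w := by
  simp only [circleIntegral, smul_eq_mul, Finset.mul_sum]
  exact intervalIntegral.integral_finset_sum fun i hi => (h i hi).out

lemma integral_cross_zero {z a : ℂ} {n : ℝ} (hn : 0 < n) (hz : z ∈ ball (0:ℂ) n)
    (ha : a ∈ ball (0:ℂ) n) (hza : z ≠ a) (ρ : ℂ) :
    (∮ w in C(0, n), (w - z)⁻¹ * (ρ / (w - a))) = 0 := by
  have hzs : ∀ w ∈ sphere (0:ℂ) n, w ≠ z := by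
    intro w hw he
    rw [mem_sphere_zero_iff_norm] at hw
    rw [mem_ball_zero_iff] at hz
    rw [he] at hw; linarith [hw ▸ hz]
  have has : ∀ w ∈ sphere (0:ℂ) n, w ≠ a := by
    intro w hw he
    rw [mem_sphere_zero_iff_norm] at hw
    rw [mem_ball_zero_iff] at ha
    rw [he] at hw; linarith [hw ▸ ha]
  have hcongr : Set.EqOn (fun w => (w - z)⁻¹ * (ρ / (w - a)))
      (fun w => (ρ * (z - a)⁻¹) * ((w - z)⁻¹ - (w - a)⁻¹)) (sphere (0:ℂ) n) := by
    intro w hw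
    have h1 : w - z ≠ 0 := sub_ne_zero.mpr (hzs w hw)
    have h2 : w - a ≠ 0 := sub_ne_zero.mpr (has w hw)
    have h3 : z - a ≠ 0 := sub_ne_zero.mpr hza
    field_simp
    ring
  have hint1 : CircleIntegrable (fun w => (w - z)⁻¹) 0 n :=
    (((continuousOn_id).sub continuousOn_const).inv₀
      fun w hw => sub_ne_zero.mpr (hzs w hw)).circleIntegrable hn.le
  have hint2 : CircleIntegrable (fun w => (w - a)⁻¹) 0 n :=
    (((continuousOn_id).sub continuousOn_const).inv₀
      fun w hw => sub_ne_zero.mpr (has w hw)).circleIntegrable hn.le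
  rw [circleIntegral.integral_congr hn.le hcongr, circleIntegral.integral_const_mul,
    circleIntegral.integral_sub hint1 hint2,
    circleIntegral.integral_sub_inv_of_mem_ball hz,
    circleIntegral.integral_sub_inv_of_mem_ball ha, sub_self, mul_zero]

lemma key (f : ℂ → ℂ) (r : ℤ → ℂ)
    (hf : DifferentiableOn ℂ f {z : ℂ | ∀ m : ℤ, z ≠ hpt m})
    (hpole : ∀ m : ℤ, ∃ h : ℂ → ℂ, AnalyticAt ℂ h (hpt m) ∧
      ∀ᶠ w in 𝓝[≠] (hpt m), h w = f w - r m / (w - hpt m))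
    (z : ℂ) (hz : ∀ m : ℤ, z ≠ hpt m) (n : ℕ) (hn : ‖z‖ < n) :
    f z - ∑ m ∈ Finset.Ico (-(n:ℤ)) (n:ℤ), r m / (z - hpt m)
      = (2 * Real.pi * Complex.I : ℂ)⁻¹ • ∮ w in C(0, (n:ℝ)), (w - z)⁻¹ • f w := by
  classical
  choose H hHa hHe using hpole
  set T : Finset ℤ := Finset.Ico (-(n:ℤ)) (n:ℤ) with hT
  set G : ℂ → ℂ := fun w =>
    if h : ∃ m : ℤ, w = hpt m then
      H h.choose w - ∑ j ∈ T.erase h.choose, r j / (w - hpt j)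
    else f w - ∑ j ∈ T, r j / (w - hpt j) with hG
  have hnR : (0:ℝ) < n := lt_of_le_of_lt (norm_nonneg z) hn
  have hzball : z ∈ ball (0:ℂ) (n:ℝ) := by
    rw [mem_ball_zero_iff]; exact hn
  have hGU : ∀ w, (∀ m : ℤ, w ≠ hpt m) → G w = f w - ∑ j ∈ T, r j / (w - hpt j) := by
    intro w hw
    simp only [hG]
    rw [dif_neg (by push_neg; exact hw)]
  have hUdiff : ∀ w, (∀ m : ℤ, w ≠ hpt m) → DifferentiableAt ℂ G w := by
    intro w hw
    have hfw : DifferentiableAt ℂ f w :=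
      (hf w hw).differentiableAt (isOpen_U.mem_nhds hw)
    have hsum : DifferentiableAt ℂ (fun w => ∑ j ∈ T, r j / (w - hpt j)) w := by
      apply DifferentiableAt.fun_sum
      intro j _
      exact (differentiableAt_const _).div (differentiableAt_id.sub (differentiableAt_const _))
        (sub_ne_zero.mpr (hw j))
    apply (hfw.sub hsum).congr_of_eventuallyEq
    filter_upwards [isOpen_U.mem_nhds hw] with x hx
    exact hGU x hx
  have hKdiff : ∀ k ∈ T, DifferentiableAt ℂ G (hpt k) := by
    intro k hk
    set φ : ℂ → ℂ := fun w => H k w - ∑ j ∈ T.erase k, r j / (w - hpt j) with hφ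
    have hφd : DifferentiableAt ℂ φ (hpt k) := by
      apply ((hHa k).differentiableAt).sub
      apply DifferentiableAt.fun_sum
      intro j hj
      have hne : hpt k ≠ hpt j := fun e => (Finset.mem_erase.mp hj).1 (hpt_injective e).symm
      exact (differentiableAt_const _).div (differentiableAt_id.sub (differentiableAt_const _))
        (sub_ne_zero.mpr hne)
    apply hφd.congr_of_eventuallyEq
    have h1 : ∀ᶠ w in 𝓝[≠] (hpt k), G w = φ w := by
      filter_upwards [eventually_mem_U k, hHe k] with w hwU hwH
      rw [hGU w hwU, hφ]
      have hfw : f w = H k w + r k / (w - hpt k) := by rw [hwH]; ring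
      rw [hfw, ← Finset.add_sum_erase T _ hk]
      ring
    have h2 : G (hpt k) = φ (hpt k) := by
      have hex : ∃ m : ℤ, hpt k = hpt m := ⟨k, rfl⟩
      simp only [hG]
      rw [dif_pos hex]
      have hck : hex.choose = k := (hpt_injective hex.choose_spec).symm
      rw [hck]
    rw [Filter.EventuallyEq, ← nhdsNE_sup_pure (hpt k),
      Filter.eventually_sup]
    exact ⟨h1, by simpa using h2⟩
  have hballT : ∀ m : ℤ, hpt m ∈ ball (0:ℂ) (n:ℝ) → m ∈ T := by
    intro m hm
    rw [mem_ball_zero_iff] at hm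
    exact (abs_hpt_lt_iff m n).mp hm
  have hGcont : ContinuousOn G (closedBall (0:ℂ) (n:ℝ)) := by
    intro w hw
    by_cases hwU : ∀ m : ℤ, w ≠ hpt m
    · exact (hUdiff w hwU).continuousAt.continuousWithinAt
    · push_neg at hwU
      obtain ⟨m, hm⟩ := hwU
      subst hm
      rw [mem_closedBall_zero_iff] at hw
      have : ‖hpt m‖ < n := lt_of_le_of_ne hw (abs_hpt_ne_nat m n)
      exact (hKdiff m ((abs_hpt_lt_iff m n).mp this)).continuousAt.continuousWithinAt
  have hGd : ∀ x ∈ ball (0:ℂ) (n:ℝ) \ (∅ : Set ℂ), DifferentiableAt ℂ G x := by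
    rintro x ⟨hx, -⟩
    by_cases hxU : ∀ m : ℤ, x ≠ hpt m
    · exact hUdiff x hxU
    · push_neg at hxU
      obtain ⟨m, hm⟩ := hxU
      subst hm
      exact hKdiff m (hballT m hx)
  have cauchy :=
    Complex.two_pi_I_inv_smul_circleIntegral_sub_inv_smul_of_differentiable_on_off_countable
      countable_empty hzball hGcont hGd
  have hGz : G z = f z - ∑ j ∈ T, r j / (z - hpt j) := hGU z hz
  have hsphereU : ∀ w ∈ sphere (0:ℂ) (n:ℝ), ∀ m : ℤ, w ≠ hpt m := by
    intro w hw m he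
    rw [mem_sphere_zero_iff_norm] at hw
    exact abs_hpt_ne_nat m n (by rw [← he]; exact hw)
  have hwz : ∀ w ∈ sphere (0:ℂ) (n:ℝ), w ≠ z := by
    intro w hw he
    rw [mem_sphere_zero_iff_norm] at hw
    rw [he] at hw
    exact absurd hw (ne_of_lt hn)
  have hfc : ContinuousOn f (sphere (0:ℂ) (n:ℝ)) :=
    (hf.mono fun w hw => hsphereU w hw).continuousOn
  have hinvc : ContinuousOn (fun w => (w - z)⁻¹) (sphere (0:ℂ) (n:ℝ)) :=
    (continuousOn_id.sub continuousOn_const).inv₀ fun w hw => sub_ne_zero.mpr (hwz w hw)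
  have hint1 : CircleIntegrable (fun w => (w - z)⁻¹ • f w) 0 (n:ℝ) :=
    (hinvc.smul hfc).circleIntegrable hnR.le
  have hintj : ∀ j ∈ T, CircleIntegrable (fun w => (w - z)⁻¹ * (r j / (w - hpt j))) 0 (n:ℝ) := by
    intro j _
    have hja : ∀ w ∈ sphere (0:ℂ) (n:ℝ), w - hpt j ≠ 0 :=
      fun w hw => sub_ne_zero.mpr (hsphereU w hw j)
    exact (hinvc.mul (continuousOn_const.div
      (continuousOn_id.sub continuousOn_const) hja)).circleIntegrable hnR.le
  have hint2 : CircleIntegrable (fun w => ∑ j ∈ T, (w - z)⁻¹ * (r j / (w - hpt j))) 0 (n:ℝ) := by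
    apply ContinuousOn.circleIntegrable hnR.le
    exact continuousOn_finset_sum T fun j hj =>
      hinvc.mul (continuousOn_const.div (continuousOn_id.sub continuousOn_const)
        fun w hw => sub_ne_zero.mpr (hsphereU w hw j))
  have e1 : (∮ w in C(0,(n:ℝ)), (w - z)⁻¹ • G w)
      = ∮ w in C(0,(n:ℝ)), ((w - z)⁻¹ • f w - ∑ j ∈ T, (w - z)⁻¹ * (r j / (w - hpt j))) := by
    apply circleIntegral.integral_congr hnR.le
    intro w hw
    simp only []
    rw [hGU w (hsphereU w hw)]
    simp only [smul_eq_mul]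
    rw [mul_sub, Finset.mul_sum]
  have e2 := circleIntegral.integral_sub hint1 hint2
  have e3 := circleIntegral_finset_sum T
    (fun j w => (w - z)⁻¹ * (r j / (w - hpt j))) 0 (n:ℝ) hintj
  have e4 : ∀ j ∈ T, (∮ w in C(0,(n:ℝ)), (w - z)⁻¹ * (r j / (w - hpt j))) = 0 := by
    intro j hj
    have haj : hpt j ∈ ball (0:ℂ) (n:ℝ) := by
      rw [mem_ball_zero_iff]
      exact (abs_hpt_lt_iff j n).mpr hj
    exact integral_cross_zero hnR hzball haj (hz j) (r j)
  have hcirc : (∮ w in C(0, (n:ℝ)), (w - z)⁻¹ • G w) = ∮ w in C(0, (n:ℝ)), (w - z)⁻¹ • f w := by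
    rw [e1, e2, e3, Finset.sum_congr rfl e4, Finset.sum_const_zero, sub_zero]
  rw [← hGz, ← hcirc]
  exact cauchy.symm

end PFE

/-!
Half-integers `ℤ' = ℤ + 1/2 ⊆ ℂ` are parametrized by `ℤ`: the half-integer `a = m + 1/2`
corresponds to `m : ℤ`.  The condition `|a| < n` for `a = m + 1/2` and `n ∈ ℕ` reads
`-n ≤ m ∧ m < n`, i.e. `m ∈ Finset.Ico (-n) n`.
-/

/-- partial fraction expansion: let `f` be holomorphic on `ℂ \ ℤ'`, with at
most a simple pole at each `a ∈ ℤ'` with residue `r(a)` (i.e. `f(z) - r(a)/(z-a)` extends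
holomorphically near `a`), and with `max_{|z|=n} |f(z)| → 0` as `n → ∞` through positive
integers.  Then for every `z ∉ ℤ'`, the symmetric partial sums `∑_{a∈ℤ', |a|<n} r(a)/(z-a)`
converge to `f(z)` as `n → ∞`. -/
theorem partial_fraction_expansion (f : ℂ → ℂ) (r : ℤ → ℂ)
    (hf : DifferentiableOn ℂ f {z : ℂ | ∀ m : ℤ, z ≠ (m : ℂ) + 1 / 2})
    (hpole : ∀ m : ℤ, ∃ h : ℂ → ℂ, AnalyticAt ℂ h ((m : ℂ) + 1 / 2) ∧
      ∀ᶠ z in 𝓝[≠] ((m : ℂ) + 1 / 2), h z = f z - r m / (z - ((m : ℂ) + 1 / 2)))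
    (hdecay : ∀ ε : ℝ, 0 < ε → ∃ N : ℕ, 0 < N ∧ ∀ n : ℕ, N ≤ n → ∀ z : ℂ,
      ‖z‖ = n → ‖f z‖ < ε) :
    ∀ z : ℂ, (∀ m : ℤ, z ≠ (m : ℂ) + 1 / 2) →
      Filter.Tendsto
        (fun n : ℕ => ∑ m ∈ Finset.Ico (-(n : ℤ)) (n : ℤ), r m / (z - ((m : ℂ) + 1 / 2)))
        Filter.atTop (𝓝 (f z)) := by
  intro z hz
  rw [Metric.tendsto_atTop]
  intro ε hε
  obtain ⟨N, hN0, hNf⟩ := hdecay (ε/3) (by positivity)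
  refine ⟨max N (⌈2 * ‖z‖⌉₊ + 1), fun n hn => ?_⟩
  have hnN : N ≤ n := le_trans (le_max_left _ _) hn
  have hn2 : (⌈2 * ‖z‖⌉₊ + 1 : ℕ) ≤ n := le_trans (le_max_right _ _) hn
  have habs : 2 * ‖z‖ < n := by
    calc 2 * ‖z‖ ≤ (⌈2 * ‖z‖⌉₊ : ℝ) := Nat.le_ceil _
    _ < n := by exact_mod_cast Nat.lt_of_succ_le hn2
  have habs1 : ‖z‖ < n := by nlinarith [norm_nonneg z]
  have hnR : (0:ℝ) < n := lt_of_le_of_lt (norm_nonneg z) habs1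
  have hkey : f z - ∑ m ∈ Finset.Ico (-(n:ℤ)) (n:ℤ), r m / (z - ((m : ℂ) + 1/2))
      = (2 * Real.pi * Complex.I : ℂ)⁻¹ • ∮ w in C(0, (n:ℝ)), (w - z)⁻¹ • f w :=
    PFE.key f r hf hpole z hz n habs1
  have hbound : ∀ w ∈ sphere (0:ℂ) (n:ℝ), ‖(w - z)⁻¹ • f w‖ ≤ (ε/3) / ((n:ℝ)/2) := by
    intro w hw
    rw [mem_sphere_zero_iff_norm] at hw
    have h1 : (n:ℝ)/2 ≤ ‖w - z‖ := by
      have h2 := norm_sub_norm_le w z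
      rw [hw] at h2
      linarith
    have h3 : ‖f w‖ ≤ ε/3 :=
      le_of_lt (hNf n hnN w (by exact hw))
    rw [norm_smul, norm_inv, inv_mul_eq_div]
    exact div_le_div₀ (by positivity) h3 (by positivity) h1
  have hIb := circleIntegral.norm_integral_le_of_norm_le_const hnR.le hbound
  have hnorm2pi : ‖(2 * Real.pi * Complex.I : ℂ)‖ = 2 * Real.pi := by
    rw [norm_mul, norm_mul, Complex.norm_I, mul_one, Complex.norm_two,
      Complex.norm_real, Real.norm_eq_abs, _root_.abs_of_nonneg Real.pi_pos.le]
  have hfinal : dist (∑ m ∈ Finset.Ico (-(n:ℤ)) (n:ℤ), r m / (z - ((m : ℂ) + 1/2))) (f z)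
      = ‖(2 * Real.pi * Complex.I : ℂ)⁻¹ • ∮ w in C((0:ℂ), (n:ℝ)), (w - z)⁻¹ • f w‖ := by
    rw [dist_eq_norm, norm_sub_rev, hkey]
  rw [hfinal, norm_smul, norm_inv, hnorm2pi]
  have hb2 : (2 * Real.pi)⁻¹ * ‖∮ w in C((0:ℂ), (n:ℝ)), (w - z)⁻¹ • f w‖
      ≤ (2 * Real.pi)⁻¹ * (2 * Real.pi * (n:ℝ) * ((ε/3) / ((n:ℝ)/2))) := by
    apply mul_le_mul_of_nonneg_left hIb
    positivity
  have heq : (2 * Real.pi)⁻¹ * (2 * Real.pi * (n:ℝ) * ((ε/3) / ((n:ℝ)/2))) = 2 * (ε/3) := by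
    field_simp
  rw [heq] at hb2
  calc (2 * Real.pi)⁻¹ * ‖∮ w in C((0:ℂ), (n:ℝ)), (w - z)⁻¹ • f w‖ ≤ 2 * (ε/3) := hb2
  _ < ε := by linarith
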